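/- Let K_Λ > 0 and K_m ≥ K_Λ, and let V : [0, ∞) → (0, ∞) be a differentiable function satisfying, for all λ ≥ 0, both K_Λ²·V(λ) ≤ V'(λ) and V'(λ) ≤ (K_Λ + (K_m − K_Λ)·e^{−K_Λ²·λ})²·V(λ). Then for all λ ≥ 0, 1 ≤ V(λ)/(V(0)·e^{K_Λ²·λ}) ≤ e^{(½·(K_m/K_Λ + 1)² − 2)}. -/

import Mathlib

/-- Two-sided volume estimate, valid at all flow times: if `V > 0` satisfies
`K_Λ²·V ≤ V' ≤ (K_Λ + (K_m − K_Λ)e^{−K_Λ²λ})²·V` on `[0, ∞)` with `K_m ≥ K_Λ > 0`, then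
`1 ≤ V(λ)/(V(0)·e^{K_Λ²λ}) ≤ e^{½(K_m/K_Λ+1)²−2}` for all `λ ≥ 0`. -/
theorem stmt_7 (KΛ Km : ℝ) (hKΛ : 0 < KΛ) (hKm : KΛ ≤ Km) (V V' : ℝ → ℝ)
    (hVpos : ∀ x ∈ Set.Ici (0 : ℝ), 0 < V x)
    (hderiv : ∀ x ∈ Set.Ici (0 : ℝ), HasDerivWithinAt V (V' x) (Set.Ici (0 : ℝ)) x)
    (hlow : ∀ x ∈ Set.Ici (0 : ℝ), KΛ ^ 2 * V x ≤ V' x)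
    (hhigh : ∀ x ∈ Set.Ici (0 : ℝ),
      V' x ≤ (KΛ + (Km - KΛ) * Real.exp (-KΛ ^ 2 * x)) ^ 2 * V x) :
    ∀ lam ∈ Set.Ici (0 : ℝ),
      1 ≤ V lam / (V 0 * Real.exp (KΛ ^ 2 * lam)) ∧
      V lam / (V 0 * Real.exp (KΛ ^ 2 * lam)) ≤
        Real.exp ((1 / 2) * (Km / KΛ + 1) ^ 2 - 2) := by
  intro lam hlam
  have hlam0 : (0 : ℝ) ≤ lam := hlam
  set a : ℝ := Km - KΛ with ha
  have ha0 : 0 ≤ a := sub_nonneg.2 hKm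
  have hK2 : (0 : ℝ) < KΛ ^ 2 := by positivity
  have hVcont : ContinuousOn V (Set.Ici 0) := fun x hx => (hderiv x hx).continuousWithinAt
  have hint : interior (Set.Ici (0 : ℝ)) = Set.Ioi 0 := interior_Ici
  have hV0 : 0 < V 0 := hVpos 0 Set.self_mem_Ici
  have hE : 0 < Real.exp (KΛ ^ 2 * lam) := Real.exp_pos _
  -- exponential helper
  have hexp : ∀ c x : ℝ, HasDerivAt (fun t => Real.exp (c * t)) (c * Real.exp (c * x)) x := by
    intro c x
    have h1 : HasDerivAt (fun t : ℝ => c * t) c x := by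
      simpa using (hasDerivAt_id x).const_mul c
    simpa [mul_comm] using h1.exp
  -- Lower bound: F t = V t * exp (-(KΛ^2) * t) is monotone on Ici 0
  have hFmono : MonotoneOn (fun t => V t * Real.exp (-(KΛ ^ 2) * t)) (Set.Ici 0) := by
    apply monotoneOn_of_hasDerivWithinAt_nonneg (convex_Ici 0) (by fun_prop)
      (f' := fun t => (V' t - KΛ ^ 2 * V t) * Real.exp (-(KΛ ^ 2) * t))
    · intro x hx
      rw [hint] at hx ⊢
      have hx' : x ∈ Set.Ici (0 : ℝ) := Set.Ioi_subset_Ici_self hx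
      have h1 : HasDerivWithinAt V (V' x) (Set.Ioi 0) x :=
        (hderiv x hx').mono Set.Ioi_subset_Ici_self
      have h2 := (hexp (-(KΛ ^ 2)) x).hasDerivWithinAt (s := Set.Ioi (0:ℝ))
      have := h1.mul h2
      refine this.congr_deriv ?_
      ring
    · intro x hx
      rw [hint] at hx
      have hx' : x ∈ Set.Ici (0 : ℝ) := Set.Ioi_subset_Ici_self hx
      have := hlow x hx'
      have hE' : 0 < Real.exp (-(KΛ ^ 2) * x) := Real.exp_pos _
      nlinarith
  have hlow' : V 0 ≤ V lam * Real.exp (-(KΛ ^ 2) * lam) := by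
    have := hFmono (Set.self_mem_Ici) hlam hlam0
    simpa using this
  constructor
  · rw [le_div_iff₀ (by positivity), one_mul]
    have := mul_le_mul_of_nonneg_right hlow' (le_of_lt hE)
    calc V 0 * Real.exp (KΛ ^ 2 * lam)
        ≤ V lam * Real.exp (-(KΛ ^ 2) * lam) * Real.exp (KΛ ^ 2 * lam) := this
      _ = V lam := by rw [mul_assoc, ← Real.exp_add]; ring_nf; simp
  -- Upper bound
  · set g : ℝ → ℝ := fun t => KΛ ^ 2 * t + (2 * a / KΛ) * (1 - Real.exp (-(KΛ ^ 2) * t))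
      + (a ^ 2 / (2 * KΛ ^ 2)) * (1 - Real.exp (-(2 * KΛ ^ 2) * t)) with hg
    have hg' : ∀ x : ℝ, HasDerivAt g ((KΛ + a * Real.exp (-KΛ ^ 2 * x)) ^ 2) x := by
      intro x
      have h1 : HasDerivAt (fun t : ℝ => KΛ ^ 2 * t) (KΛ ^ 2) x := by
        simpa using (hasDerivAt_id x).const_mul (KΛ ^ 2)
      have h2 := ((hexp (-(KΛ ^ 2)) x).const_sub 1).const_mul (2 * a / KΛ)
      have h3 := ((hexp (-(2 * KΛ ^ 2)) x).const_sub 1).const_mul (a ^ 2 / (2 * KΛ ^ 2))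
      have := (h1.add h2).add h3
      refine this.congr_deriv ?_
      have he2 : Real.exp (-(2 * KΛ ^ 2) * x) = Real.exp (-KΛ ^ 2 * x) ^ 2 := by
        rw [← Real.exp_nat_mul]; ring_nf
      have he1 : Real.exp (-(KΛ ^ 2) * x) = Real.exp (-KΛ ^ 2 * x) := by ring_nf
      rw [he2, he1]
      field_simp
      ring
    have hGanti : AntitoneOn (fun t => V t * Real.exp (-(g t))) (Set.Ici 0) := by
      apply antitoneOn_of_hasDerivWithinAt_nonpos (convex_Ici 0)
        (f' := fun t => (V' t - (KΛ + a * Real.exp (-KΛ ^ 2 * t)) ^ 2 * V t) * Real.exp (-(g t)))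
      · exact hVcont.mul ((Real.continuous_exp.comp (by fun_prop : Continuous fun t => -(g t))).continuousOn)
      · intro x hx
        rw [hint] at hx ⊢
        have hx' : x ∈ Set.Ici (0 : ℝ) := Set.Ioi_subset_Ici_self hx
        have h1 : HasDerivWithinAt V (V' x) (Set.Ioi 0) x :=
          (hderiv x hx').mono Set.Ioi_subset_Ici_self
        have h2 : HasDerivAt (fun t => Real.exp (-(g t)))
            (Real.exp (-(g x)) * (-(KΛ + a * Real.exp (-KΛ ^ 2 * x)) ^ 2)) x := by
          simpa using ((hg' x).neg).exp
        have := h1.mul (h2.hasDerivWithinAt (s := Set.Ioi (0:ℝ)))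
        refine this.congr_deriv ?_
        ring
      · intro x hx
        rw [hint] at hx
        have hx' : x ∈ Set.Ici (0 : ℝ) := Set.Ioi_subset_Ici_self hx
        have := hhigh x hx'
        have hE' : 0 < Real.exp (-(g x)) := Real.exp_pos _
        have : V' x - (KΛ + a * Real.exp (-KΛ ^ 2 * x)) ^ 2 * V x ≤ 0 := by
          linarith
        nlinarith
    have hup : V lam * Real.exp (-(g lam)) ≤ V 0 := by
      have h0 : g 0 = 0 := by simp [hg]
      have := hGanti (Set.self_mem_Ici) hlam hlam0
      simpa [h0] using this
    -- V lam ≤ V 0 * exp (g lam)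
    have hVlam : V lam ≤ V 0 * Real.exp (g lam) := by
      have hE' : 0 < Real.exp (g lam) := Real.exp_pos _
      have := mul_le_mul_of_nonneg_right hup (le_of_lt hE')
      calc V lam = V lam * Real.exp (-(g lam)) * Real.exp (g lam) := by
            rw [mul_assoc, ← Real.exp_add]; simp
        _ ≤ V 0 * Real.exp (g lam) := this
    rw [div_le_iff₀ (by positivity)]
    have hgle : g lam - KΛ ^ 2 * lam ≤ (1 / 2) * (Km / KΛ + 1) ^ 2 - 2 := by
      have he1 : 0 < Real.exp (-(KΛ ^ 2) * lam) := Real.exp_pos _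
      have he2 : 0 < Real.exp (-(2 * KΛ ^ 2) * lam) := Real.exp_pos _
      have hC : (1 / 2) * (Km / KΛ + 1) ^ 2 - 2 = 2 * a / KΛ + a ^ 2 / (2 * KΛ ^ 2) := by
        rw [ha]; field_simp; ring
      have c1 : 0 ≤ 2 * a / KΛ := by positivity
      have c2 : 0 ≤ a ^ 2 / (2 * KΛ ^ 2) := by positivity
      have b1 : (1 - Real.exp (-(KΛ ^ 2) * lam)) ≤ 1 := by linarith
      have b2 : (1 - Real.exp (-(2 * KΛ ^ 2) * lam)) ≤ 1 := by linarith
      have : g lam - KΛ ^ 2 * lam ≤ 2 * a / KΛ + a ^ 2 / (2 * KΛ ^ 2) := by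
        simp only [hg]
        nlinarith [mul_le_mul_of_nonneg_left b1 c1, mul_le_mul_of_nonneg_left b2 c2]
      linarith [hC ▸ this]
    calc V lam ≤ V 0 * Real.exp (g lam) := hVlam
      _ = V 0 * Real.exp (g lam - KΛ ^ 2 * lam) * Real.exp (KΛ ^ 2 * lam) := by
          rw [mul_assoc, ← Real.exp_add]; ring_nf
      _ ≤ Real.exp ((1 / 2) * (Km / KΛ + 1) ^ 2 - 2) * (V 0 * Real.exp (KΛ ^ 2 * lam)) := by
          have := Real.exp_le_exp.2 hgle
          have h := mul_le_mul_of_nonneg_left this (le_of_lt hV0)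
          nlinarith [Real.exp_pos (KΛ ^ 2 * lam), Real.exp_pos (g lam - KΛ ^ 2 * lam)]
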